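/- Let φ(x) = Q_1(x) = sqrt(4/(x²+1)) and φ' its derivative. Then ∫_ℝ [(1/16)φ² - (9/32)φ⁴ + (1/8)φ⁶ - (1/64)φ⁸ + (1/4)φ²(φ')²] dx = 0 (i.e. the real even part of Z^(3) integrates to zero, expressing P₂(q_{1/4,1}) = 0). -/

import Mathlib

open MeasureTheory Real Filter Polynomial

noncomputable def phi1 (x : ℝ) : ℝ := Real.sqrt (4 / (x ^ 2 + 1))

lemma hu_pos (x : ℝ) : (0:ℝ) < x ^ 2 + 1 := by positivity

lemma phi1_sq (x : ℝ) : phi1 x ^ 2 = 4 / (x ^ 2 + 1) := by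
  rw [phi1, Real.sq_sqrt]; positivity

lemma hasDerivAt_u (x : ℝ) : HasDerivAt (fun x : ℝ => x ^ 2 + 1) (2 * x) x := by
  simpa using (hasDerivAt_pow 2 x).add_const 1

lemma deriv_phi1_sq (x : ℝ) : (deriv phi1 x) ^ 2 = 4 * x ^ 2 / (x ^ 2 + 1) ^ 3 := by
  have hu := hu_pos x
  have hinner : HasDerivAt (fun x : ℝ => 4 / (x ^ 2 + 1))
      ((0 * (x ^ 2 + 1) - 4 * (2 * x)) / (x ^ 2 + 1) ^ 2) x :=
    (hasDerivAt_const x (4:ℝ)).div (hasDerivAt_u x) hu.ne'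
  have hne : (4:ℝ) / (x ^ 2 + 1) ≠ 0 := by positivity
  have h := hinner.sqrt hne
  rw [show phi1 = fun x => Real.sqrt (4 / (x ^ 2 + 1)) from rfl, h.deriv]
  rw [div_pow, mul_pow, Real.sq_sqrt (by positivity : (0:ℝ) ≤ 4 / (x ^ 2 + 1))]
  field_simp
  ring

noncomputable def FF (x : ℝ) : ℝ := (-3 * x ^ 5 + 10 * x ^ 3 - 3 * x) / (12 * (x ^ 2 + 1) ^ 3)

noncomputable def gg (x : ℝ) : ℝ :=
  (1/4) / (x ^ 2 + 1) - (9/2) / (x ^ 2 + 1) ^ 2 + 12 / (x ^ 2 + 1) ^ 3 - 8 / (x ^ 2 + 1) ^ 4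

lemma hasDerivAt_FF (x : ℝ) : HasDerivAt FF (gg x) x := by
  have hu := hu_pos x
  have hN : HasDerivAt (fun x : ℝ => -3 * x ^ 5 + 10 * x ^ 3 - 3 * x)
      (-3 * (5 * x ^ 4) + 10 * (3 * x ^ 2) - 3 * 1) x := by
    exact (((hasDerivAt_pow 5 x).const_mul (-3)).add ((hasDerivAt_pow 3 x).const_mul 10)).sub
      ((hasDerivAt_id x).const_mul 3) |>.congr_deriv (by push_cast; ring)
  have hD : HasDerivAt (fun x : ℝ => 12 * (x ^ 2 + 1) ^ 3)
      (12 * (3 * (x ^ 2 + 1) ^ 2 * (2 * x))) x :=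
    ((hasDerivAt_u x).pow 3).const_mul 12 |>.congr_deriv (by push_cast; ring)
  have hDne : 12 * (x ^ 2 + 1) ^ 3 ≠ 0 := by positivity
  have : HasDerivAt FF _ x := hN.div hD hDne
  convert this using 1
  rw [gg]
  field_simp
  ring

lemma integrand_eq (x : ℝ) :
    (1 / 16) * (phi1 x) ^ 2 - (9 / 32) * (phi1 x) ^ 4 + (1 / 8) * (phi1 x) ^ 6
        - (1 / 64) * (phi1 x) ^ 8 + (1 / 4) * (phi1 x) ^ 2 * (deriv phi1 x) ^ 2 = gg x := by
  have hu := hu_pos x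
  have h2 := phi1_sq x
  have h4 : phi1 x ^ 4 = (4 / (x ^ 2 + 1)) ^ 2 := by rw [← h2]; ring
  have h6 : phi1 x ^ 6 = (4 / (x ^ 2 + 1)) ^ 3 := by rw [← h2]; ring
  have h8 : phi1 x ^ 8 = (4 / (x ^ 2 + 1)) ^ 4 := by rw [← h2]; ring
  rw [h2, h4, h6, h8, deriv_phi1_sq, gg]
  field_simp
  ring

lemma gg_cont : Continuous gg := by
  have hc : Continuous fun x : ℝ => x ^ 2 + 1 := by continuity
  rw [show gg = fun x => (1/4) / (x ^ 2 + 1) - (9/2) / (x ^ 2 + 1) ^ 2 + 12 / (x ^ 2 + 1) ^ 3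
      - 8 / (x ^ 2 + 1) ^ 4 from rfl]
  fun_prop (disch := intros; positivity)

lemma gg_integrable : Integrable gg := by
  refine (integrable_inv_one_add_sq.const_mul 25).mono' gg_cont.aestronglyMeasurable ?_
  filter_upwards with x
  have hu := hu_pos x
  have h1 : (1:ℝ) ≤ x ^ 2 + 1 := by nlinarith [sq_nonneg x]
  rw [Real.norm_eq_abs, abs_le]
  have hb : 25 * (1 + x ^ 2)⁻¹ = 25 / (x ^ 2 + 1) := by rw [add_comm]; ring
  rw [hb]
  have e1 : gg x = ((1/4) * (x^2+1)^3 - (9/2) * (x^2+1)^2 + 12 * (x^2+1) - 8) / (x^2+1)^4 := by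
    rw [gg]; field_simp
  have e2 : (25:ℝ) / (x^2+1) = 25 * (x^2+1)^3 / (x^2+1)^4 := by
    field_simp
  rw [e1, e2]
  have p3 : (1:ℝ) ≤ (x^2+1)^3 := one_le_pow₀ h1
  have p2 : (1:ℝ) ≤ (x^2+1)^2 := one_le_pow₀ h1
  have q32 : (x^2+1)^2 ≤ (x^2+1)^3 := by nlinarith
  have q31 : (x^2+1) ≤ (x^2+1)^3 := by nlinarith
  have q21 : (x^2+1) ≤ (x^2+1)^2 := by nlinarith
  constructor
  · rw [← neg_div, div_le_div_iff_of_pos_right (by positivity : (0:ℝ) < (x^2+1)^4)]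
    nlinarith
  · rw [div_le_div_iff_of_pos_right (by positivity : (0:ℝ) < (x^2+1)^4)]
    nlinarith

lemma FF_top : Tendsto FF atTop (nhds 0) := by
  have hdeg : (C (-3) * X ^ 5 + C 10 * X ^ 3 + C (-3) * X : ℝ[X]).degree <
      (C 12 * X ^ 6 + C 36 * X ^ 4 + C 36 * X ^ 2 + C 12 : ℝ[X]).degree := by
    have hq : (C 12 * X ^ 6 + C 36 * X ^ 4 + C 36 * X ^ 2 + C 12 : ℝ[X]).degree = 6 := by
      compute_degree!
    have hp : (C (-3) * X ^ 5 + C 10 * X ^ 3 + C (-3) * X : ℝ[X]).degree ≤ 5 := by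
      compute_degree
    rw [hq]
    exact lt_of_le_of_lt hp (by norm_num)
  have h := Polynomial.div_tendsto_zero_of_degree_lt _ _ hdeg
  refine h.congr fun x => ?_
  simp [FF]
  ring

lemma FF_odd (x : ℝ) : FF (-x) = - FF x := by
  rw [FF, FF]; ring_nf

lemma FF_bot : Tendsto FF atBot (nhds 0) := by
  have h1 : Tendsto (fun x => FF (-x)) atBot (nhds 0) :=
    FF_top.comp tendsto_neg_atBot_atTop
  have h2 : Tendsto (fun x => - FF (-x)) atBot (nhds (-0)) := h1.neg
  rw [neg_zero] at h2
  refine h2.congr fun x => ?_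
  rw [FF_odd, neg_neg]

theorem stmt_18 :
    ∫ x : ℝ,
      ((1 / 16) * (phi1 x) ^ 2 - (9 / 32) * (phi1 x) ^ 4 + (1 / 8) * (phi1 x) ^ 6
        - (1 / 64) * (phi1 x) ^ 8 + (1 / 4) * (phi1 x) ^ 2 * (deriv phi1 x) ^ 2) = 0 := by
  have h : ∫ x : ℝ, gg x = 0 - 0 :=
    MeasureTheory.integral_of_hasDerivAt_of_tendsto hasDerivAt_FF gg_integrable FF_bot FF_top
  rw [sub_zero] at h
  rw [← h]
  congr 1
  ext x
  exact integrand_eq x
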